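/- arXiv:1802.03950 — 7 statements merged into one kernel-verified Lean document; each statement's English description precedes it below -/
import Mathlib

section
/- Let (E, <, #) be a finite prime event structure in which every local configuration [e] is a configuration, and let p : E → ℕ be a thread labelling such that any two distinct events e, e' with p(e) = p(e') satisfy e < e' or e' < e or e # e'. For an event e' and a thread i, if [e'] contains events of thread i, then these events are totally ordered by <, and we write tmax(e', i) for their <-greatest element. Then for any two events e, e' with p(e) = i, p(e') = i' and i ≠ i': e < e' holds if and only if [e'] contains some event of thread i and e ≤ tmax(e', i). -/
/-- A configuration of a prime event structure: causally closed and conflict-free. -/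
def IsConfig {E : Type*} (lt cfl : E → E → Prop) (C : Set E) : Prop :=
  (∀ e ∈ C, ∀ e', lt e' e → e' ∈ C) ∧ ∀ e ∈ C, ∀ e' ∈ C, ¬ cfl e e'

/-- The local configuration [e] := ⌈e⌉ ∪ {e} of an event. -/
def locC {E : Type*} (lt : E → E → Prop) (e : E) : Set E := {e' | lt e' e ∨ e' = e}

lemma finset_max {E : Type*} (lt : E → E → Prop) (hTrans : Transitive lt)
    (s : Finset E) (hs : s.Nonempty)
    (htot : ∀ x ∈ s, ∀ y ∈ s, x ≠ y → lt x y ∨ lt y x) :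
    ∃ m ∈ s, ∀ x ∈ s, x = m ∨ lt x m := by
  classical
  induction s using Finset.induction with
  | empty => exact absurd hs (by simp)
  | @insert a s ha ih =>
    by_cases hsne : s.Nonempty
    · obtain ⟨m, hm, hmax⟩ := ih hsne
        (fun x hx y hy hxy => htot x (by simp [hx]) y (by simp [hy]) hxy)
      have hane : a ≠ m := fun h => ha (h ▸ hm)
      rcases htot a (by simp) m (by simp [hm]) hane with h | h
      · exact ⟨m, by simp [hm], fun x hx => by
          rcases Finset.mem_insert.mp hx with rfl | hx
          · exact Or.inr h
          · exact hmax x hx⟩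
      · refine ⟨a, by simp, fun x hx => ?_⟩
        rcases Finset.mem_insert.mp hx with rfl | hx
        · exact Or.inl rfl
        · rcases hmax x hx with rfl | hlt
          · exact Or.inr h
          · exact Or.inr (hTrans hlt h)
    · have : s = ∅ := Finset.not_nonempty_iff_eq_empty.mp hsne
      subst this
      exact ⟨a, by simp, fun x hx => Or.inl (by simpa using hx)⟩

/-- In a finite PES where every local configuration is a configuration, with a
thread labelling p such that distinct events of the same thread are causally
related or in conflict, for events e, e' of distinct threads:
e < e' iff [e'] contains some event of thread p(e) and e ≤ tmax(e', p(e)),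
where tmax(e', i) is the <-greatest event of thread i in [e']. -/
theorem stmt4 {E : Type*} [Finite E] (lt cfl : E → E → Prop)
    (hTrans : Transitive lt) (hIrrefl : ∀ e, ¬ lt e e)
    (hSymm : Symmetric cfl) (hCIrrefl : ∀ e, ¬ cfl e e)
    (hloc : ∀ e, IsConfig lt cfl (locC lt e))
    (p : E → ℕ)
    (hthread : ∀ e e', e ≠ e' → p e = p e' → lt e e' ∨ lt e' e ∨ cfl e e')
    (e e' : E) (hne : p e ≠ p e') :
    lt e e' ↔
      ∃ m ∈ locC lt e', p m = p e ∧
        (∀ m' ∈ locC lt e', p m' = p e → m' = m ∨ lt m' m) ∧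
        (e = m ∨ lt e m) := by
  classical
  haveI := Fintype.ofFinite E
  constructor
  · intro hlt
    set s : Finset E := Finset.univ.filter (fun x => x ∈ locC lt e' ∧ p x = p e) with hs
    have hes : e ∈ s := by rw [hs, Finset.mem_filter]; exact ⟨Finset.mem_univ _, Or.inl hlt, rfl⟩
    have htot : ∀ x ∈ s, ∀ y ∈ s, x ≠ y → lt x y ∨ lt y x := by
      intro x hx y hy hxy
      simp only [hs, Finset.mem_filter] at hx hy
      rcases hthread x y hxy (hx.2.2.trans hy.2.2.symm) with h | h | h
      · exact Or.inl h
      · exact Or.inr h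
      · exact absurd h ((hloc e').2 x hx.2.1 y hy.2.1)
    obtain ⟨m, hm, hmax⟩ := finset_max lt hTrans s ⟨e, hes⟩ htot
    simp only [hs, Finset.mem_filter] at hm
    refine ⟨m, hm.2.1, hm.2.2, fun m' hm' hpm' => hmax m' (by simp [hs, hm', hpm']), ?_⟩
    rcases hmax e hes with h | h
    · exact Or.inl h
    · exact Or.inr h
  · rintro ⟨m, hm, hpm, _, hem⟩
    have hmne : m ≠ e' := fun h => hne (by rw [← hpm, h])
    have hme' : lt m e' := by
      rcases hm with h | h
      · exact h
      · exact absurd h hmne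
    rcases hem with rfl | h
    · exact hme'
    · exact hTrans h hme'
end

section
/- Let (E, <, #) be a finite prime event structure with inherited conflict in which every local configuration [e] is a configuration. Let L be a set of locks and λ : E → L ∪ {⊥} a partial lock labelling such that: (i) whenever two events are in immediate conflict, both carry the same lock label l ∈ L; and (ii) any two distinct events carrying the same lock label l ∈ L satisfy e < e' or e' < e or e # e'. For an event e and a lock l, if [e] contains events labelled l, then these events are totally ordered by <, and we write lmax(e, l) for their <-greatest element. Then for any two events e, e': e # e' holds if and only if there exists some l ∈ L such that lmax(e, l) and lmax(e', l) are both defined and lmax(e, l) # lmax(e', l). -/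
/-- The history ⌈e⌉ of an event. -/
def histSet {E : Type*} (lt : E → E → Prop) (e : E) : Set E := {e' | lt e' e}

/-- A set of events is conflict-free. -/
def CflFree {E : Type*} (cfl : E → E → Prop) (S : Set E) : Prop :=
  ∀ a ∈ S, ∀ b ∈ S, ¬ cfl a b

/-- Two events are in immediate conflict: they are in conflict and both
⌈e⌉ ∪ [e'] and [e] ∪ ⌈e'⌉ are conflict-free. -/
def ImmCfl {E : Type*} (lt cfl : E → E → Prop) (e e' : E) : Prop :=
  cfl e e' ∧ CflFree cfl (histSet lt e ∪ locC lt e') ∧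
    CflFree cfl (locC lt e ∪ histSet lt e')

lemma locC_subset {E : Type*} {lt : E → E → Prop} (hTrans : Transitive lt) {a d : E}
    (h : a ∈ locC lt d) : locC lt a ⊆ locC lt d := by
  rintro x (hx | rfl)
  · rcases h with h | rfl
    · exact Or.inl (hTrans hx h)
    · exact Or.inl hx
  · exact h

lemma locC_ssubset {E : Type*} {lt : E → E → Prop} (hTrans : Transitive lt)
    (hIrrefl : ∀ e, ¬ lt e e) {a d : E} (h : lt a d) : locC lt a ⊂ locC lt d := by
  refine ⟨locC_subset hTrans (Or.inl h), fun hsub => ?_⟩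
  rcases hsub (Or.inr rfl : d ∈ locC lt d) with hd | rfl
  · exact hIrrefl a (hTrans h hd)
  · exact hIrrefl _ h

lemma exists_imm {E : Type*} [Finite E] (lt cfl : E → E → Prop)
    (hTrans : Transitive lt) (hIrrefl : ∀ e, ¬ lt e e)
    (hSymm : Symmetric cfl)
    (hloc : ∀ e, IsConfig lt cfl (locC lt e)) :
    ∀ d d', cfl d d' → ∃ a b, a ∈ locC lt d ∧ b ∈ locC lt d' ∧ ImmCfl lt cfl a b := by
  have key : ∀ n d d', (locC lt d).ncard + (locC lt d').ncard ≤ n → cfl d d' →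
      ∃ a b, a ∈ locC lt d ∧ b ∈ locC lt d' ∧ ImmCfl lt cfl a b := by
    intro n
    induction n with
    | zero =>
      intro d d' hle _
      have h1 : 0 < (locC lt d).ncard :=
        Set.ncard_pos (Set.toFinite _) |>.mpr ⟨d, Or.inr rfl⟩
      omega
    | succ n ih =>
      intro d d' hle hc
      by_cases himm : ImmCfl lt cfl d d'
      · exact ⟨d, d', Or.inr rfl, Or.inr rfl, himm⟩
      · -- one of the two unions has a conflict
        have hcf : ¬ (CflFree cfl (histSet lt d ∪ locC lt d') ∧
            CflFree cfl (locC lt d ∪ histSet lt d')) := by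
          intro ⟨h1, h2⟩; exact himm ⟨hc, h1, h2⟩
        -- extract a conflicting pair (x,y) with lt x d, y ∈ locC d' (after symmetry juggling)
        rcases not_and_or.mp hcf with hbad | hbad
        · simp only [CflFree, not_forall, not_not] at hbad
          obtain ⟨x, hx, y, hy, hxy⟩ := hbad
          rcases hx with hx | hx
          · rcases hy with hy | hy
            · exact absurd hxy ((hloc d).2 x (Or.inl hx) y (Or.inl hy))
            · -- x ∈ ⌈d⌉, y ∈ [d'] : recurse on (x, y)
              have hdec : (locC lt x).ncard + (locC lt y).ncard ≤ n := by
                have h1 : (locC lt x).ncard < (locC lt d).ncard :=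
                  Set.ncard_lt_ncard (locC_ssubset hTrans hIrrefl hx) (Set.toFinite _)
                have h2 : (locC lt y).ncard ≤ (locC lt d').ncard :=
                  Set.ncard_le_ncard (locC_subset hTrans hy) (Set.toFinite _)
                omega
              obtain ⟨a, b, ha, hb, hab⟩ := ih x y hdec hxy
              exact ⟨a, b, locC_subset hTrans (Or.inl hx) ha,
                locC_subset hTrans hy hb, hab⟩
          · rcases hy with hy | hy
            · -- x ∈ [d'], y ∈ ⌈d⌉ : recurse on (y, x) with symm
              have hdec : (locC lt y).ncard + (locC lt x).ncard ≤ n := by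
                have h1 : (locC lt y).ncard < (locC lt d).ncard :=
                  Set.ncard_lt_ncard (locC_ssubset hTrans hIrrefl hy) (Set.toFinite _)
                have h2 : (locC lt x).ncard ≤ (locC lt d').ncard :=
                  Set.ncard_le_ncard (locC_subset hTrans hx) (Set.toFinite _)
                omega
              obtain ⟨a, b, ha, hb, hab⟩ := ih y x hdec (hSymm hxy)
              exact ⟨a, b, locC_subset hTrans (Or.inl hy) ha,
                locC_subset hTrans hx hb, hab⟩
            · exact absurd hxy ((hloc d').2 x hx y hy)
        · simp only [CflFree, not_forall, not_not] at hbad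
          obtain ⟨x, hx, y, hy, hxy⟩ := hbad
          rcases hx with hx | hx
          · rcases hy with hy | hy
            · exact absurd hxy ((hloc d).2 x hx y hy)
            · -- x ∈ [d], y ∈ ⌈d'⌉
              have hdec : (locC lt x).ncard + (locC lt y).ncard ≤ n := by
                have h1 : (locC lt x).ncard ≤ (locC lt d).ncard :=
                  Set.ncard_le_ncard (locC_subset hTrans hx) (Set.toFinite _)
                have h2 : (locC lt y).ncard < (locC lt d').ncard :=
                  Set.ncard_lt_ncard (locC_ssubset hTrans hIrrefl hy) (Set.toFinite _)
                omega
              obtain ⟨a, b, ha, hb, hab⟩ := ih x y hdec hxy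
              exact ⟨a, b, locC_subset hTrans hx ha,
                locC_subset hTrans (Or.inl hy) hb, hab⟩
          · rcases hy with hy | hy
            · -- x ∈ ⌈d'⌉, y ∈ [d]
              have hdec : (locC lt y).ncard + (locC lt x).ncard ≤ n := by
                have h1 : (locC lt y).ncard ≤ (locC lt d).ncard :=
                  Set.ncard_le_ncard (locC_subset hTrans hy) (Set.toFinite _)
                have h2 : (locC lt x).ncard < (locC lt d').ncard :=
                  Set.ncard_lt_ncard (locC_ssubset hTrans hIrrefl hx) (Set.toFinite _)
                omega
              obtain ⟨a, b, ha, hb, hab⟩ := ih y x hdec (hSymm hxy)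
              exact ⟨a, b, locC_subset hTrans hy ha,
                locC_subset hTrans (Or.inl hx) hb, hab⟩
            · exact absurd hxy ((hloc d').2 x (Or.inl hx) y (Or.inl hy))
  exact fun d d' hc => key _ d d' le_rfl hc

lemma exists_lmax {E L : Type*} [Finite E] (lt cfl : E → E → Prop)
    (hTrans : Transitive lt) (hIrrefl : ∀ e, ¬ lt e e)
    (hloc : ∀ e, IsConfig lt cfl (locC lt e)) (lab : E → Option L)
    (hlk : ∀ e e' (l : L), e ≠ e' → lab e = some l → lab e' = some l →
      lt e e' ∨ lt e' e ∨ cfl e e')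
    (e b : E) (l : L) (hb : b ∈ locC lt e) (hbl : lab b = some l) :
    ∃ m, m ∈ locC lt e ∧ lab m = some l ∧
      (∀ a ∈ locC lt e, lab a = some l → a = m ∨ lt a m) ∧ (b = m ∨ lt b m) := by
  haveI : IsTrans E (fun a c => lt c a) := ⟨fun _ _ _ h1 h2 => hTrans h2 h1⟩
  haveI : IsIrrefl E (fun a c => lt c a) := ⟨fun a => hIrrefl a⟩
  have hwf : WellFounded (fun a c : E => lt c a) :=
    Finite.wellFounded_of_trans_of_irrefl _
  obtain ⟨m, hm, hmin⟩ := hwf.has_min {x | x ∈ locC lt e ∧ lab x = some l} ⟨b, hb, hbl⟩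
  have hmax : ∀ a ∈ locC lt e, lab a = some l → a = m ∨ lt a m := by
    intro a ha hal
    by_cases hne : a = m
    · exact Or.inl hne
    · rcases hlk a m l hne hal hm.2 with h | h | h
      · exact Or.inr h
      · exact absurd h (hmin a ⟨ha, hal⟩)
      · exact absurd h ((hloc e).2 a ha m hm.1)
  exact ⟨m, hm.1, hm.2, hmax, hmax b hb hbl⟩

/-- In a finite PES with inherited conflict where every local configuration is a
configuration, with a partial lock labelling λ such that immediately conflicting
events carry the same lock label and distinct events with the same lock label are
causally related or in conflict: e # e' iff there is a lock l such that
lmax(e, l) and lmax(e', l) are defined and lmax(e, l) # lmax(e', l),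
where lmax(e, l) is the <-greatest l-labelled event in [e]. -/
theorem stmt5 {E L : Type*} [Finite E] (lt cfl : E → E → Prop)
    (hTrans : Transitive lt) (hIrrefl : ∀ e, ¬ lt e e)
    (hSymm : Symmetric cfl) (hCIrrefl : ∀ e, ¬ cfl e e)
    (hInh : ∀ e e' e'', cfl e e' → lt e' e'' → cfl e e'')
    (hloc : ∀ e, IsConfig lt cfl (locC lt e))
    (lab : E → Option L)
    (hImm : ∀ e e', ImmCfl lt cfl e e' → ∃ l : L, lab e = some l ∧ lab e' = some l)
    (hlk : ∀ e e' (l : L), e ≠ e' → lab e = some l → lab e' = some l →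
      lt e e' ∨ lt e' e ∨ cfl e e')
    (e e' : E) :
    cfl e e' ↔
      ∃ (l : L) (m m' : E),
        m ∈ locC lt e ∧ lab m = some l ∧
          (∀ a ∈ locC lt e, lab a = some l → a = m ∨ lt a m) ∧
        m' ∈ locC lt e' ∧ lab m' = some l ∧
          (∀ a ∈ locC lt e', lab a = some l → a = m' ∨ lt a m') ∧
        cfl m m' := by
  constructor
  · intro hc
    obtain ⟨a, b, ha, hb, himm⟩ := exists_imm lt cfl hTrans hIrrefl hSymm hloc e e' hc
    obtain ⟨l, hal, hbl⟩ := hImm a b himm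
    obtain ⟨m, hm, hml, hmmax, hale⟩ :=
      exists_lmax lt cfl hTrans hIrrefl hloc lab hlk e a l ha hal
    obtain ⟨m', hm', hml', hmmax', hble⟩ :=
      exists_lmax lt cfl hTrans hIrrefl hloc lab hlk e' b l hb hbl
    refine ⟨l, m, m', hm, hml, hmmax, hm', hml', hmmax', ?_⟩
    have hab : cfl a b := himm.1
    have ham' : cfl a m' := by
      rcases hble with rfl | h
      · exact hab
      · exact hInh a b m' hab h
    rcases hale with rfl | h
    · exact ham'
    · exact hSymm (hInh m' a m (hSymm ham') h)
  · rintro ⟨l, m, m', hm, _, _, hm', _, _, hmm'⟩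
    have h1 : cfl m e' := by
      rcases hm' with h | rfl
      · exact hInh m m' e' hmm' h
      · exact hmm'
    rcases hm with h | rfl
    · exact hSymm (hInh e' m e (hSymm h1) h)
    · exact h1
end

section
/- Let (E, <, #) be a finite prime event structure with inherited conflict in which every local configuration [e] is a configuration. If e # e' for two events e, e', then there exist events e₁ ∈ [e] and e₂ ∈ [e'] such that e₁ and e₂ are in immediate conflict. -/
/-- In a finite PES with inherited conflict in which every local configuration is
a configuration, if e # e' then some e₁ ∈ [e] and e₂ ∈ [e'] are in immediate
conflict. -/
theorem stmt6 {E : Type*} [Finite E] (lt cfl : E → E → Prop)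
    (hTrans : Transitive lt) (hIrrefl : ∀ e, ¬ lt e e)
    (hSymm : Symmetric cfl) (hCIrrefl : ∀ e, ¬ cfl e e)
    (hInh : ∀ e e' e'', cfl e e' → lt e' e'' → cfl e e'')
    (hloc : ∀ e, IsConfig lt cfl (locC lt e))
    (e e' : E) (h : cfl e e') :
    ∃ e₁ ∈ locC lt e, ∃ e₂ ∈ locC lt e', ImmCfl lt cfl e₁ e₂ := by
  haveI : IsTrans E lt := ⟨hTrans⟩
  haveI : IsIrrefl E lt := ⟨hIrrefl⟩
  have wf : WellFounded lt := Finite.wellFounded_of_trans_of_irrefl lt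
  have hA : ({a | a ∈ locC lt e ∧ ∃ b ∈ locC lt e', cfl a b} : Set E).Nonempty :=
    ⟨e, Or.inr rfl, e', Or.inr rfl, h⟩
  obtain ⟨a, ⟨hae, b0, hb0, hab0⟩, hamin⟩ := wf.has_min _ hA
  have hB : ({b | b ∈ locC lt e' ∧ cfl a b} : Set E).Nonempty := ⟨b0, hb0, hab0⟩
  obtain ⟨b, ⟨hbe, hab⟩, hbmin⟩ := wf.has_min _ hB
  -- downward closure facts
  have hclA : ∀ x, lt x a → x ∈ locC lt e := by
    intro x hx
    rcases hae with hlt | rfl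
    · exact Or.inl (hTrans hx hlt)
    · exact Or.inl hx
  have hclB : ∀ y, lt y b → y ∈ locC lt e' := by
    intro y hy
    rcases hbe with hlt | rfl
    · exact Or.inl (hTrans hy hlt)
    · exact Or.inl hy
  have minA : ∀ x, lt x a → ¬ cfl x b := fun x hx hc =>
    hamin x ⟨hclA x hx, b, hbe, hc⟩ hx
  have minB : ∀ y, lt y b → ¬ cfl a y := fun y hy hc =>
    hbmin y ⟨hclB y hy, hc⟩ hy
  -- from cfl x y with y ∈ [b], derive cfl x b
  have liftB : ∀ x y, cfl x y → (lt y b ∨ y = b) → cfl x b := by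
    intro x y hc hy
    rcases hy with hlt | rfl
    · exact hInh x y b hc hlt
    · exact hc
  have liftA : ∀ x y, cfl x y → (lt y a ∨ y = a) → cfl x a := by
    intro x y hc hy
    rcases hy with hlt | rfl
    · exact hInh x y a hc hlt
    · exact hc
  refine ⟨a, hae, b, hbe, hab, ?_, ?_⟩
  · -- CflFree (histSet a ∪ locC b)
    rintro u (hu | hu) v (hv | hv) hc
    · exact (hloc a).2 u (Or.inl hu) v (Or.inl hv) hc
    · exact minA u hu (liftB u v hc hv)
    · exact minA v hv (liftB v u (hSymm hc) hu)
    · exact (hloc b).2 u hu v hv hc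
  · -- CflFree (locC a ∪ histSet b)
    rintro u (hu | hu) v (hv | hv) hc
    · exact (hloc a).2 u hu v hv hc
    · rcases hu with hlt | rfl
      · exact minA u hlt (hInh u v b hc hv)
      · exact minB v hv hc
    · rcases hv with hlt | rfl
      · exact minA v hlt (hInh v u b (hSymm hc) hu)
      · exact minB u hu (hSymm hc)
    · exact (hloc b).2 u (Or.inl hu) v (Or.inl hv) hc
end

section
/- Let (E, <, #) be a prime event structure with inherited conflict in which every local configuration [e] is a configuration. Let U ⊆ E be a set of events, C ⊆ U a configuration, D ⊆ U a set of events with C ∩ D = ∅, and k ≥ 1. Let e₁, …, e_k ∈ D be pairwise distinct events and e'₁, …, e'_k ∈ U events such that for every i: e'_i # e_i, [e'_i] ⊆ U, [e'_i] ∪ C is a configuration, and [e'_i] ∩ D = ∅; and such that ¬(e'_i # e'_j) for all i ≠ j. Then the set J := [e'₁] ∪ … ∪ [e'_k] is a k-partial alternative to D after C in U; in particular, J is a configuration, J ∪ C is a configuration, and J ∩ D = ∅. -/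
/-- A clue to D after C in U: a configuration J ⊆ U such that C ∪ J is a
configuration and D ∩ J = ∅. -/
def Clue {E : Type*} (lt cfl : E → E → Prop) (U C D J : Set E) : Prop :=
  IsConfig lt cfl J ∧ J ⊆ U ∧ IsConfig lt cfl (C ∪ J) ∧ D ∩ J = ∅

/-- An alternative to D after C in U: a clue J such that every event of D is in
conflict with some event of J. -/
def AltTo {E : Type*} (lt cfl : E → E → Prop) (U C D J : Set E) : Prop :=
  Clue lt cfl U C D J ∧ ∀ e ∈ D, ∃ e' ∈ J, cfl e e'

/-- A k-partial alternative to D after C in U: a configuration J ⊆ U which is an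
alternative to some D̂ ⊆ D with |D̂| = k. -/
def KPartialAlt {E : Type*} (lt cfl : E → E → Prop) (U C D : Set E) (k : ℕ)
    (J : Set E) : Prop :=
  IsConfig lt cfl J ∧ J ⊆ U ∧
    ∃ Dhat ⊆ D, Dhat.ncard = k ∧ AltTo lt cfl U C Dhat J

/-- Correctness of the comb construction: given pairwise distinct events
e₁, …, e_k ∈ D and events e'₁, …, e'_k ∈ U with e'_i # e_i, [e'_i] ⊆ U,
[e'_i] ∪ C a configuration, [e'_i] ∩ D = ∅, and ¬(e'_i # e'_j) for i ≠ j,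
the set J := [e'₁] ∪ … ∪ [e'_k] is a k-partial alternative to D after C in U;
in particular J is a configuration, J ∪ C is a configuration, and J ∩ D = ∅. -/
theorem stmt7 {E : Type*} (lt cfl : E → E → Prop)
    (hTrans : Transitive lt) (hIrrefl : ∀ e, ¬ lt e e)
    (hSymm : Symmetric cfl) (hCIrrefl : ∀ e, ¬ cfl e e)
    (hInh : ∀ e e' e'', cfl e e' → lt e' e'' → cfl e e'')
    (hloc : ∀ e, IsConfig lt cfl (locC lt e))
    (U C D : Set E) (hCU : C ⊆ U) (hC : IsConfig lt cfl C) (hDU : D ⊆ U)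
    (hCD : C ∩ D = ∅) (k : ℕ) (hk : 1 ≤ k)
    (e e' : Fin k → E) (hinj : Function.Injective e) (heD : ∀ i, e i ∈ D)
    (he'U : ∀ i, e' i ∈ U)
    (hcfl : ∀ i, cfl (e' i) (e i))
    (hlocU : ∀ i, locC lt (e' i) ⊆ U)
    (hlocC : ∀ i, IsConfig lt cfl (locC lt (e' i) ∪ C))
    (hlocD : ∀ i, locC lt (e' i) ∩ D = ∅)
    (hnc : ∀ i j, i ≠ j → ¬ cfl (e' i) (e' j)) :
    KPartialAlt lt cfl U C D k (⋃ i, locC lt (e' i)) ∧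
      IsConfig lt cfl (⋃ i, locC lt (e' i)) ∧
      IsConfig lt cfl ((⋃ i, locC lt (e' i)) ∪ C) ∧
      (⋃ i, locC lt (e' i)) ∩ D = ∅ := by

  classical
  set J : Set E := ⋃ i, locC lt (e' i) with hJ
  -- membership in J
  have hmemJ : ∀ i, e' i ∈ J := fun i => Set.mem_iUnion.2 ⟨i, Or.inr rfl⟩
  have hJU : J ⊆ U := by
    intro x hx
    rcases Set.mem_iUnion.1 hx with ⟨i, hi⟩
    exact hlocU i hi
  -- conflict facts: if a ∈ locC(e' i), cfl a b → cfl (e' i) b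
  have hup : ∀ i a b, a ∈ locC lt (e' i) → cfl b a → cfl b (e' i) := by
    intro i a b ha hba
    rcases ha with h | h
    · exact hInh b a (e' i) hba h
    · rw [h] at hba; exact hba
  have hJconfig : IsConfig lt cfl J := by
    constructor
    · intro x hx y hyx
      rcases Set.mem_iUnion.1 hx with ⟨i, hi⟩
      exact Set.mem_iUnion.2 ⟨i, (hloc (e' i)).1 x hi y hyx⟩
    · intro a ha b hb hab
      rcases Set.mem_iUnion.1 ha with ⟨i, hi⟩
      rcases Set.mem_iUnion.1 hb with ⟨j, hj⟩
      by_cases hij : i = j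
      · subst hij
        exact (hloc (e' i)).2 a hi b hj hab
      · have h1 : cfl b (e' i) := hup i a b hi (hSymm hab)
        have h2 : cfl (e' i) (e' j) := hup j b (e' i) hj (hSymm h1)
        exact hnc i j hij h2
  have hJC : IsConfig lt cfl (J ∪ C) := by
    constructor
    · intro x hx y hyx
      rcases hx with hx | hx
      · rcases Set.mem_iUnion.1 hx with ⟨i, hi⟩
        exact Or.inl (Set.mem_iUnion.2 ⟨i, (hloc (e' i)).1 x hi y hyx⟩)
      · exact Or.inr (hC.1 x hx y hyx)
    · intro a ha b hb hab
      rcases ha with ha | ha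
      · rcases Set.mem_iUnion.1 ha with ⟨i, hi⟩
        rcases hb with hb | hb
        · exact hJconfig.2 a (Set.mem_iUnion.2 ⟨i, hi⟩) b hb hab
        · exact (hlocC i).2 a (Or.inl hi) b (Or.inr hb) hab
      · rcases hb with hb | hb
        · rcases Set.mem_iUnion.1 hb with ⟨i, hi⟩
          exact (hlocC i).2 a (Or.inr ha) b (Or.inl hi) hab
        · exact hC.2 a ha b hb hab
  have hCJ : IsConfig lt cfl (C ∪ J) := by
    rw [Set.union_comm]; exact hJC
  have hJD : J ∩ D = ∅ := by
    ext x
    simp only [Set.mem_inter_iff, Set.mem_empty_iff_false, iff_false, not_and]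
    intro hx hxD
    rcases Set.mem_iUnion.1 hx with ⟨i, hi⟩
    have : x ∈ locC lt (e' i) ∩ D := ⟨hi, hxD⟩
    rw [hlocD i] at this; exact this
  refine ⟨⟨hJconfig, hJU, Set.range e, ?_, ?_, ⟨hJconfig, hJU, hCJ, ?_⟩, ?_⟩, hJconfig, hJC, hJD⟩
  · rintro x ⟨i, rfl⟩; exact heD i
  · rw [← Set.image_univ, Set.ncard_image_of_injective _ hinj, Set.ncard_univ,
      Nat.card_eq_fintype_card, Fintype.card_fin]
  · apply Set.eq_empty_iff_forall_notMem.2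
    rintro x ⟨⟨i, rfl⟩, hxJ⟩
    have : e i ∈ J ∩ D := ⟨hxJ, heD i⟩
    rw [hJD] at this; exact this
  · rintro x ⟨i, rfl⟩
    exact ⟨e' i, hmemJ i, hSymm (hcfl i)⟩
end

section
/- Let φ be a CNF formula with clauses c₁, …, c_m over Boolean variables v₁, …, v_n in which no variable occurs both positively and negatively in the same clause. Define a prime event structure as follows. Its events are: t_i and f_i for each variable v_i; r_{i,j} for each pair (i, j) such that v_i occurs in clause c_j; and d_j for each clause c_j. Causality is the strict partial order generated by: t_i < r_{i,j} whenever v_i occurs positively in c_j, and f_i < r_{i,j} whenever v_i occurs negatively in c_j. Conflict is the smallest symmetric relation # satisfying: t_i # f_i for every i; any two distinct events of the set {d_j} ∪ {r_{i,j} : v_i occurs in c_j} are in conflict, for every j; and e # e' together with e' < e'' implies e # e''. Let U be the set of all events and D := {d₁, …, d_m}. Then φ is satisfiable if and only if there exists an alternative J to D after the empty configuration in U. -/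
/-- Events: t_i and f_i for each variable, r_{i,j} for each variable/clause pair,
and d_j for each clause. -/
inductive Ev11 (n m : ℕ) where
  | t : Fin n → Ev11 n m
  | f : Fin n → Ev11 n m
  | r : Fin n → Fin m → Ev11 n m
  | d : Fin m → Ev11 n m

/-- Causality: t_i < r_{i,j} whenever v_i occurs positively in c_j, and
f_i < r_{i,j} whenever v_i occurs negatively in c_j. -/
def lt11 {n m : ℕ} (pos neg : Fin m → Finset (Fin n)) :
    Ev11 n m → Ev11 n m → Prop
  | .t i, .r i' j => i = i' ∧ i ∈ pos j
  | .f i, .r i' j => i = i' ∧ i ∈ neg j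
  | _, _ => False

/-- Membership in the clause set {d_j} ∪ {r_{i,j} : v_i occurs in c_j}. -/
def inClause11 {n m : ℕ} (pos neg : Fin m → Finset (Fin n)) (j : Fin m) :
    Ev11 n m → Prop
  | .d j' => j' = j
  | .r i j' => j' = j ∧ (i ∈ pos j ∨ i ∈ neg j)
  | _ => False

/-- Conflict: the smallest symmetric relation such that t_i # f_i, any two
distinct events of a clause set are in conflict, and conflict is inherited
along causality. -/
inductive cfl11 {n m : ℕ} (pos neg : Fin m → Finset (Fin n)) :
    Ev11 n m → Ev11 n m → Prop where
  | tf (i : Fin n) : cfl11 pos neg (.t i) (.f i)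
  | clause (j : Fin m) (e e' : Ev11 n m) :
      inClause11 pos neg j e → inClause11 pos neg j e' → e ≠ e' →
        cfl11 pos neg e e'
  | symm {e e' : Ev11 n m} : cfl11 pos neg e e' → cfl11 pos neg e' e
  | inherit {e e' e'' : Ev11 n m} :
      cfl11 pos neg e e' → lt11 pos neg e' e'' → cfl11 pos neg e e''

/-- The set U of all events of the PES: all t_i, f_i, d_j, and those r_{i,j}
such that v_i occurs in clause c_j. -/
def U11 {n m : ℕ} (pos neg : Fin m → Finset (Fin n)) : Set (Ev11 n m) :=
  {e | match e with
       | .r i j => i ∈ pos j ∨ i ∈ neg j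
       | _ => True}

/-- Closed form of the conflict relation. -/
def cflC {n m : ℕ} (pos neg : Fin m → Finset (Fin n)) :
    Ev11 n m → Ev11 n m → Prop
  | .t i, .f i' => i = i'
  | .f i, .t i' => i = i'
  | .t i, .r i' j => i = i' ∧ i ∈ neg j
  | .r i' j, .t i => i = i' ∧ i ∈ neg j
  | .f i, .r i' j => i = i' ∧ i ∈ pos j
  | .r i' j, .f i => i = i' ∧ i ∈ pos j
  | .r i j, .r i' j' =>
      (i = i' ∧ ((i ∈ pos j ∧ i ∈ neg j') ∨ (i ∈ neg j ∧ i ∈ pos j'))) ∨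
      (j = j' ∧ (i ∈ pos j ∨ i ∈ neg j) ∧ (i' ∈ pos j ∨ i' ∈ neg j) ∧ i ≠ i')
  | .d j, .r i j' => j = j' ∧ (i ∈ pos j ∨ i ∈ neg j)
  | .r i j', .d j => j = j' ∧ (i ∈ pos j ∨ i ∈ neg j)
  | _, _ => False

theorem cflC_symm {n m : ℕ} (pos neg : Fin m → Finset (Fin n))
    {e e' : Ev11 n m} (h : cflC pos neg e e') : cflC pos neg e' e := by
  cases e <;> cases e' <;> simp only [cflC] at h ⊢ <;>
    first
      | exact h
      | exact h.symm
      | (obtain ⟨rfl, h2⟩ := h; exact ⟨rfl, h2⟩)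
      | (rcases h with ⟨rfl, h2 | h2⟩ | ⟨rfl, h1, h2, h3⟩
         · exact Or.inl ⟨rfl, Or.inr ⟨h2.2, h2.1⟩⟩
         · exact Or.inl ⟨rfl, Or.inl ⟨h2.2, h2.1⟩⟩
         · exact Or.inr ⟨rfl, h2, h1, h3.symm⟩)
      | tauto

theorem cfl_to_C {n m : ℕ} (pos neg : Fin m → Finset (Fin n))
    {e e' : Ev11 n m} (h : cfl11 pos neg e e') : cflC pos neg e e' := by
  induction h with
  | tf i => simp [cflC]
  | clause j e e' h1 h2 hne =>
      cases e <;> cases e' <;> simp_all [inClause11, cflC] <;> tauto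
  | symm _ ih => exact cflC_symm pos neg ih
  | @inherit e e' e'' _ hlt ih =>
      cases e' <;> cases e'' <;> simp only [lt11] at hlt <;> try exact hlt.elim
      · obtain ⟨rfl, hp⟩ := hlt
        cases e <;> simp only [cflC] at ih ⊢
        · obtain rfl := ih; exact ⟨rfl, hp⟩
        · obtain ⟨rfl, hn⟩ := ih; exact Or.inl ⟨rfl, Or.inr ⟨hn, hp⟩⟩
      · obtain ⟨rfl, hp⟩ := hlt
        cases e <;> simp only [cflC] at ih ⊢
        · obtain rfl := ih; exact ⟨rfl, hp⟩
        · obtain ⟨rfl, hn⟩ := ih; exact Or.inl ⟨rfl, Or.inl ⟨hn, hp⟩⟩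

/-- A CNF formula φ in which no variable occurs both positively and negatively
in the same clause is satisfiable iff there exists an alternative J to
D = {d₁, …, d_m} after the empty configuration in U. -/
theorem stmt11 {n m : ℕ} (pos neg : Fin m → Finset (Fin n))
    (hdisj : ∀ j i, ¬ (i ∈ pos j ∧ i ∈ neg j)) :
    (∃ a : Fin n → Bool, ∀ j : Fin m,
        (∃ i ∈ pos j, a i = true) ∨ (∃ i ∈ neg j, a i = false)) ↔
      ∃ J : Set (Ev11 n m),
        AltTo (lt11 pos neg) (cfl11 pos neg) (U11 pos neg) ∅
          {e | ∃ j : Fin m, e = Ev11.d j} J := by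
  classical
  constructor
  · rintro ⟨a, ha⟩
    have hex : ∀ j, ∃ i, (i ∈ pos j ∧ a i = true) ∨ (i ∈ neg j ∧ a i = false) := by
      intro j
      rcases ha j with ⟨i, hi, hai⟩ | ⟨i, hi, hai⟩
      exacts [⟨i, Or.inl ⟨hi, hai⟩⟩, ⟨i, Or.inr ⟨hi, hai⟩⟩]
    choose w hw using hex
    have hwp : ∀ j, w j ∈ pos j → a (w j) = true := by
      intro j h
      rcases hw j with ⟨_, h2⟩ | ⟨h1, _⟩
      · exact h2
      · exact absurd ⟨h, h1⟩ (hdisj j _)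
    have hwn : ∀ j, w j ∈ neg j → a (w j) = false := by
      intro j h
      rcases hw j with ⟨h1, _⟩ | ⟨_, h2⟩
      · exact absurd ⟨h1, h⟩ (hdisj j _)
      · exact h2
    have hcfg : IsConfig (lt11 pos neg) (cfl11 pos neg) {e : Ev11 n m | match e with
      | .t i => a i = true
      | .f i => a i = false
      | .r i j => i = w j
      | .d _ => False} := by
      constructor
      ·
        intro e he e' hlt
        cases e' <;> cases e <;> simp only [lt11] at hlt
        · obtain ⟨rfl, hp⟩ := hlt
          have : _ = w _ := he
          subst this
          exact hwp _ hp
        · obtain ⟨rfl, hp⟩ := hlt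
          have : _ = w _ := he
          subst this
          exact hwn _ hp
      ·
        intro e he e' he' hc
        have hC := cfl_to_C pos neg hc
        cases e <;> cases e' <;> simp only [cflC] at hC <;>
          simp only [Set.mem_setOf_eq] at he he'
        · subst hC; rw [he] at he'; exact absurd he' (by simp)
        · subst he'
          obtain ⟨rfl, hn⟩ := hC
          rw [hwn _ hn] at he; exact absurd he (by simp)
        · subst hC; rw [he] at he'; exact absurd he' (by simp)
        · subst he'
          obtain ⟨rfl, hp⟩ := hC
          rw [hwp _ hp] at he; exact absurd he (by simp)
        · subst he
          obtain ⟨rfl, hn⟩ := hC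
          rw [hwn _ hn] at he'; exact absurd he' (by simp)
        · subst he
          obtain ⟨rfl, hp⟩ := hC
          rw [hwp _ hp] at he'; exact absurd he' (by simp)
        · subst he; subst he'
          rcases hC with ⟨heq, ⟨hp, hn⟩ | ⟨hn, hp⟩⟩ | ⟨rfl, _, _, hne⟩
          · have h1 := hwp _ hp
            rw [heq] at hn
            have h2 := hwn _ hn
            rw [heq] at h1
            simp [h1] at h2
          · have h1 := hwn _ hn
            rw [heq] at hp
            have h2 := hwp _ hp
            rw [heq] at h1
            simp [h1] at h2
          · exact hne rfl
    refine ⟨_, ⟨hcfg, ?_, by rw [Set.empty_union]; exact hcfg, ?_⟩, ?_⟩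
    · -- J ⊆ U
      intro e he
      cases e <;> simp only [U11, Set.mem_setOf_eq] <;> try trivial
      have : _ = w _ := he
      subst this
      rcases hw _ with ⟨h1, _⟩ | ⟨h1, _⟩
      exacts [Or.inl h1, Or.inr h1]
    · -- D ∩ J = ∅
      rw [Set.eq_empty_iff_forall_notMem]
      rintro e ⟨⟨j, rfl⟩, heJ⟩
      exact heJ
    · -- alternative property
      rintro e ⟨j, rfl⟩
      refine ⟨.r (w j) j, rfl, cfl11.clause j _ _ ?_ ?_ ?_⟩
      · show j = j; rfl
      · refine ⟨rfl, ?_⟩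
        rcases hw j with ⟨h1, _⟩ | ⟨h1, _⟩
        exacts [Or.inl h1, Or.inr h1]
      · intro h; cases h
  · rintro ⟨J, ⟨⟨⟨hcl, hcf⟩, hJU, hCJ, hDJ⟩, halt⟩⟩
    refine ⟨fun i => if Ev11.t i ∈ J then true else false, ?_⟩
    intro j
    obtain ⟨e', he'J, hc⟩ := halt (.d j) ⟨j, rfl⟩
    have hC := cfl_to_C pos neg hc
    cases e' <;> simp only [cflC] at hC
    obtain ⟨rfl, hio⟩ := hC
    rcases hio with hp | hn
    · have ht : Ev11.t _ ∈ J := hcl _ he'J _ ⟨rfl, hp⟩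
      exact Or.inl ⟨_, hp, by simp [ht]⟩
    · have hf : Ev11.f _ ∈ J := hcl _ he'J _ ⟨rfl, hn⟩
      have ht : Ev11.t _ ∉ J := fun ht => hcf _ ht _ hf (cfl11.tf _)
      exact Or.inr ⟨_, hn, by simp [ht]⟩
end

section
/- Let φ be a CNF formula with clauses c₁, …, c_m over Boolean variables v₁, …, v_n in which no variable occurs both positively and negatively in the same clause. Define the Petri net N_φ as follows. Places: s_i and s'_i for each variable v_i, and d_j for each clause c_j. Transitions: p_i and n_i for each variable v_i, and one further transition t. Flow: pre(p_i) = {s_i} and post(p_i) = {s'_i} ∪ {d_j : v_i occurs positively in c_j}; pre(n_i) = {s'_i} ∪ {d_j : v_i occurs positively in c_j} and post(n_i) = {d_j : v_i occurs negatively in c_j}; pre(t) = {d₁, …, d_m} and post(t) = ∅. The initial marking m₀ puts one token on each s_i and no token elsewhere. Then φ is satisfiable if and only if there is a reachable marking of N_φ at which the transition t is enabled. -/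
/-- Places of the Petri net N_φ: s_i and s'_i for each variable v_i,
and d_j for each clause c_j. -/
inductive Pl12 (n m : ℕ) where
  | s : Fin n → Pl12 n m
  | s' : Fin n → Pl12 n m
  | d : Fin m → Pl12 n m

/-- Transitions of N_φ: p_i and n_i for each variable v_i, and t. -/
inductive Tr12 (n m : ℕ) where
  | p : Fin n → Tr12 n m
  | neg : Fin n → Tr12 n m
  | t : Tr12 n m

/-- Presets: pre(p_i) = {s_i}; pre(n_i) = {s'_i} ∪ {d_j : v_i occurs positively
in c_j}; pre(t) = {d₁, …, d_m}. -/
def pre12 {n m : ℕ} (pos : Fin m → Finset (Fin n)) : Tr12 n m → Set (Pl12 n m)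
  | .p i => {Pl12.s i}
  | .neg i => {Pl12.s' i} ∪ {q | ∃ j, q = Pl12.d j ∧ i ∈ pos j}
  | .t => {q | ∃ j, q = Pl12.d j}

/-- Postsets: post(p_i) = {s'_i} ∪ {d_j : v_i occurs positively in c_j};
post(n_i) = {d_j : v_i occurs negatively in c_j}; post(t) = ∅. -/
def post12 {n m : ℕ} (pos neg : Fin m → Finset (Fin n)) :
    Tr12 n m → Set (Pl12 n m)
  | .p i => {Pl12.s' i} ∪ {q | ∃ j, q = Pl12.d j ∧ i ∈ pos j}
  | .neg i => {q | ∃ j, q = Pl12.d j ∧ i ∈ neg j}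
  | .t => ∅

/-- A transition with the given preset is enabled at a marking. -/
def enabled12 {P : Type*} (pre : Set P) (mk : P → ℕ) : Prop :=
  ∀ q ∈ pre, 1 ≤ mk q

open Classical in
/-- Firing a transition with given preset and postset at a marking. -/
noncomputable def fire12 {P : Type*} (pre post : Set P) (mk : P → ℕ) : P → ℕ :=
  fun q => mk q - (if q ∈ pre then 1 else 0) + (if q ∈ post then 1 else 0)

/-- One firing step of N_φ between markings. -/
def step12 {n m : ℕ} (pos neg : Fin m → Finset (Fin n))
    (mk mk' : Pl12 n m → ℕ) : Prop :=
  ∃ tr : Tr12 n m, enabled12 (pre12 pos tr) mk ∧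
    mk' = fire12 (pre12 pos tr) (post12 pos neg tr) mk

/-- The initial marking: one token on each s_i, no token elsewhere. -/
def m012 {n m : ℕ} : Pl12 n m → ℕ
  | .s _ => 1
  | _ => 0

section Aux

variable {n m : ℕ}

private lemma sum_upd {α : Type*} [DecidableEq α] {A : Finset α} {f g : α → ℕ} (i : α)
    (h : ∀ k, k ≠ i → f k = g k) :
    (∑ k ∈ A, f k) + (if i ∈ A then g i else 0)
      = (∑ k ∈ A, g k) + (if i ∈ A then f i else 0) := by
  by_cases hi : i ∈ A
  · simp only [if_pos hi]
    rw [← Finset.sum_erase_add A f hi, ← Finset.sum_erase_add A g hi]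
    have hcongr : ∑ k ∈ A.erase i, f k = ∑ k ∈ A.erase i, g k :=
      Finset.sum_congr rfl fun k hk => h k (Finset.ne_of_mem_erase hk)
    rw [hcongr]; ring
  · simp only [if_neg hi, add_zero]
    exact Finset.sum_congr rfl fun k hk => h k (by rintro rfl; exact hi hk)

/-- Marking after firing `p i` for all `i ∈ S`. -/
def markA (pos : Fin m → Finset (Fin n)) (S : Finset (Fin n)) : Pl12 n m → ℕ
  | .s i => if i ∈ S then 0 else 1
  | .s' i => if i ∈ S then 1 else 0
  | .d j => ((pos j) ∩ S).card

/-- Marking after firing all `p i` and then `n i` for all `i ∈ S`. -/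
def markB (pos neg : Fin m → Finset (Fin n)) (S : Finset (Fin n)) : Pl12 n m → ℕ
  | .s _ => 0
  | .s' i => if i ∈ S then 0 else 1
  | .d j => ((pos j) \ S).card + ((neg j) ∩ S).card

lemma reachA (pos neg : Fin m → Finset (Fin n)) (S : Finset (Fin n)) :
    Relation.ReflTransGen (step12 pos neg) m012 (markA pos S) := by
  induction S using Finset.induction with
  | empty =>
    have h : markA pos (∅ : Finset (Fin n)) = m012 := by
      funext q; cases q <;> simp [markA, m012]
    rw [h]
  | @insert i S hi ih =>
    refine ih.tail ⟨Tr12.p i, ?_, ?_⟩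
    · intro q hq
      simp only [pre12, Set.mem_singleton_iff] at hq
      subst hq; simp [markA, hi]
    · funext q
      cases q with
      | s k =>
        by_cases hk : k = i <;>
          simp [fire12, pre12, post12, markA, hk, hi, Finset.mem_insert]
      | s' k =>
        by_cases hk : k = i <;>
          simp [fire12, pre12, post12, markA, hk, hi, Finset.mem_insert]
      | d j =>
        simp only [fire12, pre12, post12, markA, Set.mem_singleton_iff,
          Set.mem_union, Set.mem_setOf_eq, Pl12.d.injEq]
        by_cases hij : i ∈ pos j
        · rw [Finset.inter_comm, Finset.insert_inter_of_mem hij, Finset.inter_comm]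
          have hnm : i ∉ pos j ∩ S := by simp [hi]
          rw [Finset.card_insert_of_notMem hnm]
          simp [hij]
        · rw [Finset.inter_comm, Finset.insert_inter_of_notMem hij, Finset.inter_comm]
          simp [hij]

lemma reachB (pos neg : Fin m → Finset (Fin n)) (S : Finset (Fin n)) :
    Relation.ReflTransGen (step12 pos neg) (markA pos Finset.univ) (markB pos neg S) := by
  induction S using Finset.induction with
  | empty =>
    have h : markB pos neg (∅ : Finset (Fin n)) = markA pos Finset.univ := by
      funext q; cases q <;> simp [markA, markB]
    rw [h]
  | @insert i S hi ih =>
    refine ih.tail ⟨Tr12.neg i, ?_, ?_⟩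
    · intro q hq
      simp only [pre12, Set.mem_union, Set.mem_singleton_iff, Set.mem_setOf_eq] at hq
      rcases hq with rfl | ⟨j, rfl, hij⟩
      · simp [markB, hi]
      · simp only [markB]
        have hmem : i ∈ pos j \ S := Finset.mem_sdiff.mpr ⟨hij, hi⟩
        have := Finset.card_pos.mpr ⟨i, hmem⟩
        omega
    · funext q
      cases q with
      | s k =>
        simp [fire12, pre12, post12, markB]
      | s' k =>
        by_cases hk : k = i <;>
          simp [fire12, pre12, post12, markB, hk, hi, Finset.mem_insert]
      | d j =>
        simp only [fire12, pre12, post12, markB, Set.mem_union,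
          Set.mem_singleton_iff, Set.mem_setOf_eq, Pl12.d.injEq]
        have hsd : pos j \ insert i S = (pos j \ S).erase i := by
          ext x; simp [Finset.mem_sdiff, Finset.mem_insert, Finset.mem_erase]; tauto
        by_cases hij : i ∈ pos j
        · have hmem : i ∈ pos j \ S := Finset.mem_sdiff.mpr ⟨hij, hi⟩
          have hcard : (pos j \ insert i S).card = (pos j \ S).card - 1 := by
            rw [hsd, Finset.card_erase_of_mem hmem]
          have hpos : 1 ≤ (pos j \ S).card := Finset.card_pos.mpr ⟨i, hmem⟩
          by_cases hnj : i ∈ neg j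
          · rw [Finset.inter_comm, Finset.insert_inter_of_mem hnj, Finset.inter_comm]
            have hnm : i ∉ neg j ∩ S := by simp [hi]
            rw [Finset.card_insert_of_notMem hnm, hcard]
            simp [hij, hnj]
            all_goals omega
          · rw [Finset.inter_comm, Finset.insert_inter_of_notMem hnj, Finset.inter_comm]
            rw [hcard]
            simp [hij, hnj]
            all_goals omega
        · have hcard : (pos j \ insert i S) = pos j \ S := by
            rw [hsd, Finset.erase_eq_of_notMem (by simp [hij])]
          rw [hcard]
          by_cases hnj : i ∈ neg j
          · rw [Finset.inter_comm, Finset.insert_inter_of_mem hnj, Finset.inter_comm]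
            have hnm : i ∉ neg j ∩ S := by simp [hi]
            rw [Finset.card_insert_of_notMem hnm]
            simp [hij, hnj]
            all_goals omega
          · rw [Finset.inter_comm, Finset.insert_inter_of_notMem hnj, Finset.inter_comm]
            simp [hij, hnj]

/-- The invariant preserved by all steps. -/
def Inv12 (pos neg : Fin m → Finset (Fin n)) (mk : Pl12 n m → ℕ) : Prop :=
  (∀ i, mk (.s i) + mk (.s' i) ≤ 1) ∧
  ∀ j, mk (.d j) ≤ (∑ k ∈ pos j, mk (.s' k)) +
    ∑ k ∈ neg j, (1 - mk (.s k) - mk (.s' k))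

lemma inv_step (pos neg : Fin m → Finset (Fin n)) {mk mk' : Pl12 n m → ℕ}
    (h : Inv12 pos neg mk) (hs : step12 pos neg mk mk') : Inv12 pos neg mk' := by
  obtain ⟨hone, hd⟩ := h
  obtain ⟨tr, hen, rfl⟩ := hs
  cases tr with
  | p i =>
    have h1 : 1 ≤ mk (.s i) := hen _ rfl
    have hsi : mk (.s i) = 1 := by have := hone i; omega
    have hs'i : mk (.s' i) = 0 := by have := hone i; omega
    have hA : ∀ k, fire12 (pre12 pos (Tr12.p i)) (post12 pos neg (Tr12.p i)) mk (.s k)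
        = if k = i then 0 else mk (.s k) := by
      intro k
      by_cases hk : k = i <;>
        simp [fire12, pre12, post12, hk, hsi]
    have hB : ∀ k, fire12 (pre12 pos (Tr12.p i)) (post12 pos neg (Tr12.p i)) mk (.s' k)
        = if k = i then 1 else mk (.s' k) := by
      intro k
      by_cases hk : k = i <;>
        simp [fire12, pre12, post12, hk, hs'i]
    have hD : ∀ j, fire12 (pre12 pos (Tr12.p i)) (post12 pos neg (Tr12.p i)) mk (.d j)
        = mk (.d j) + (if i ∈ pos j then 1 else 0) := by
      intro j
      by_cases hij : i ∈ pos j <;>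
        simp [fire12, pre12, post12, hij]
    constructor
    · intro k
      rw [hA, hB]
      by_cases hk : k = i
      · simp [hk]
      · simp only [if_neg hk]; exact hone k
    · intro j
      simp only [hA, hB, hD]
      have hSp := sum_upd (A := pos j) (f := fun k => if k = i then 1 else mk (.s' k))
        (g := fun k => mk (.s' k)) i (fun k hk => by simp [hk])
      have hSn := sum_upd (A := neg j)
        (f := fun k => 1 - (if k = i then 0 else mk (.s k)) - (if k = i then 1 else mk (.s' k)))
        (g := fun k => 1 - mk (.s k) - mk (.s' k)) i (fun k hk => by simp [hk])
      have := hd j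
      by_cases hij : i ∈ pos j <;> by_cases hnj : i ∈ neg j <;>
        simp [hij, hnj, hsi, hs'i] at hSp hSn ⊢ <;> omega
  | neg i =>
    have h1 : 1 ≤ mk (.s' i) := hen _ (Or.inl rfl)
    have hdj : ∀ j, i ∈ pos j → 1 ≤ mk (.d j) := fun j hij =>
      hen _ (Or.inr ⟨j, rfl, hij⟩)
    have hs'i : mk (.s' i) = 1 := by have := hone i; omega
    have hsi : mk (.s i) = 0 := by have := hone i; omega
    have hA : ∀ k, fire12 (pre12 pos (Tr12.neg i)) (post12 pos neg (Tr12.neg i)) mk (.s k)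
        = mk (.s k) := by
      intro k; simp [fire12, pre12, post12]
    have hB : ∀ k, fire12 (pre12 pos (Tr12.neg i)) (post12 pos neg (Tr12.neg i)) mk (.s' k)
        = if k = i then 0 else mk (.s' k) := by
      intro k
      by_cases hk : k = i <;>
        simp [fire12, pre12, post12, hk, hs'i]
    have hD : ∀ j, fire12 (pre12 pos (Tr12.neg i)) (post12 pos neg (Tr12.neg i)) mk (.d j)
        = mk (.d j) - (if i ∈ pos j then 1 else 0) + (if i ∈ neg j then 1 else 0) := by
      intro j
      by_cases hij : i ∈ pos j <;> by_cases hnj : i ∈ neg j <;>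
        simp [fire12, pre12, post12, hij, hnj]
    constructor
    · intro k
      rw [hA, hB]
      by_cases hk : k = i
      · subst hk; simp [hsi]
      · simp only [if_neg hk]; exact hone k
    · intro j
      simp only [hA, hB, hD]
      have hSp := sum_upd (A := pos j) (f := fun k => if k = i then 0 else mk (.s' k))
        (g := fun k => mk (.s' k)) i (fun k hk => by simp [hk])
      have hSn := sum_upd (A := neg j)
        (f := fun k => 1 - mk (.s k) - (if k = i then 0 else mk (.s' k)))
        (g := fun k => 1 - mk (.s k) - mk (.s' k)) i (fun k hk => by simp [hk])
      have h2 := hd j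
      have h3 : i ∈ pos j → 1 ≤ mk (.d j) := hdj j
      by_cases hij : i ∈ pos j <;> by_cases hnj : i ∈ neg j <;>
        simp [hij, hnj, hsi, hs'i] at hSp hSn h3 ⊢ <;> omega
  | t =>
    have hdj : ∀ j, 1 ≤ mk (.d j) := fun j => hen _ ⟨j, rfl⟩
    have hA : ∀ k, fire12 (pre12 pos Tr12.t) (post12 pos neg Tr12.t) mk (.s k)
        = mk (.s k) := by intro k; simp [fire12, pre12, post12]
    have hB : ∀ k, fire12 (pre12 pos Tr12.t) (post12 pos neg Tr12.t) mk (.s' k)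
        = mk (.s' k) := by intro k; simp [fire12, pre12, post12]
    have hD : ∀ j, fire12 (pre12 pos Tr12.t) (post12 pos neg Tr12.t) mk (.d j)
        = mk (.d j) - 1 := by intro j; simp [fire12, pre12, post12]
    constructor
    · intro k; rw [hA, hB]; exact hone k
    · intro j
      simp only [hA, hB, hD]
      have := hd j
      omega

lemma inv_reach (pos neg : Fin m → Finset (Fin n)) {mk : Pl12 n m → ℕ}
    (h : Relation.ReflTransGen (step12 pos neg) m012 mk) : Inv12 pos neg mk := by
  induction h with
  | refl =>
    constructor
    · intro i; simp [m012]
    · intro j; simp [m012]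
  | tail _ hstep ih => exact inv_step pos neg ih hstep

end Aux

/-- A CNF formula φ in which no variable occurs both positively and negatively in
the same clause is satisfiable iff some reachable marking of N_φ enables t. -/
theorem stmt12 {n m : ℕ} (pos neg : Fin m → Finset (Fin n))
    (hdisj : ∀ j i, ¬ (i ∈ pos j ∧ i ∈ neg j)) :
    (∃ a : Fin n → Bool, ∀ j : Fin m,
        (∃ i ∈ pos j, a i = true) ∨ (∃ i ∈ neg j, a i = false)) ↔
      ∃ mk : Pl12 n m → ℕ,
        Relation.ReflTransGen (step12 pos neg) m012 mk ∧
        enabled12 (pre12 pos Tr12.t) mk := by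
  constructor
  · rintro ⟨a, ha⟩
    set F : Finset (Fin n) := Finset.univ.filter (fun i => a i = false) with hF
    refine ⟨markB pos neg F, (reachA pos neg Finset.univ).trans (reachB pos neg F), ?_⟩
    intro q hq
    obtain ⟨j, rfl⟩ := hq
    simp only [markB]
    rcases ha j with ⟨i, hij, hai⟩ | ⟨i, hij, hai⟩
    · have hiF : i ∉ F := by simp [hF, hai]
      have hmem : i ∈ pos j \ F := Finset.mem_sdiff.mpr ⟨hij, hiF⟩
      have := Finset.card_pos.mpr ⟨i, hmem⟩
      omega
    · have hiF : i ∈ F := by simp [hF, hai]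
      have hmem : i ∈ neg j ∩ F := Finset.mem_inter.mpr ⟨hij, hiF⟩
      have := Finset.card_pos.mpr ⟨i, hmem⟩
      omega
  · rintro ⟨mk, hreach, hen⟩
    have hinv := inv_reach pos neg hreach
    refine ⟨fun i => decide (1 ≤ mk (.s' i)), fun j => ?_⟩
    have h1 : 1 ≤ mk (.d j) := hen _ ⟨j, rfl⟩
    have h2 := hinv.2 j
    by_cases h : (∑ k ∈ pos j, mk (.s' k)) ≠ 0
    · obtain ⟨k, hk, hk1⟩ := Finset.exists_ne_zero_of_sum_ne_zero h
      exact Or.inl ⟨k, hk, by simp [Nat.one_le_iff_ne_zero.mpr hk1]⟩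
    · have hne : (∑ k ∈ neg j, (1 - mk (.s k) - mk (.s' k))) ≠ 0 := by omega
      obtain ⟨k, hk, hk1⟩ := Finset.exists_ne_zero_of_sum_ne_zero hne
      refine Or.inr ⟨k, hk, ?_⟩
      have hz : mk (.s' k) = 0 := by omega
      simp [hz]
end

section
/- Let s ≥ 2 and let g ≤ d be natural numbers. Then there exist m ≤ 2·s·(log_s(d) + 1) (where log_s denotes the natural-number base-s logarithm) and a strictly decreasing sequence d = c₀ > c₁ > … > c_m = g of natural numbers such that for every i < m, either c_{i+1} = c_i − 1, or there is some j ≥ 1 such that s^j divides c_i and c_{i+1} = c_i − s^j. -/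
def SkipStep (s a b : ℕ) : Prop :=
  b < a ∧ (b = a - 1 ∨ ∃ j, 1 ≤ j ∧ s ^ j ∣ a ∧ b = a - s ^ j)

def SkipReach (s N a b : ℕ) : Prop :=
  ∃ m ≤ N, ∃ c : ℕ → ℕ, c 0 = a ∧ c m = b ∧ ∀ i < m, SkipStep s (c i) (c (i + 1))

lemma skipReach_mono {s N N' a b : ℕ} (h : N ≤ N') (hr : SkipReach s N a b) :
    SkipReach s N' a b := by
  obtain ⟨m, hm, c, h1, h2, h3⟩ := hr
  exact ⟨m, le_trans hm h, c, h1, h2, h3⟩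

lemma skipReach_unit (s N a b : ℕ) (hba : b ≤ a) (h : a - b ≤ N) : SkipReach s N a b := by
  refine ⟨a - b, h, fun i => a - i, by simp, ?_, fun i hi => ?_⟩
  · show a - (a - b) = b
    omega
  · show SkipStep s (a - i) (a - (i + 1))
    exact ⟨by omega, Or.inl (by omega)⟩

lemma skipReach_trans {s N1 N2 a b c : ℕ} (h1 : SkipReach s N1 a b) (h2 : SkipReach s N2 b c) :
    SkipReach s (N1 + N2) a c := by
  obtain ⟨m1, hm1, c1, e1, e2, st1⟩ := h1
  obtain ⟨m2, hm2, c2, f1, f2, st2⟩ := h2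
  refine ⟨m1 + m2, by omega, fun i => if i ≤ m1 then c1 i else c2 (i - m1), by simp [e1], ?_, ?_⟩
  · dsimp only
    split
    · have hm0 : m2 = 0 := by omega
      subst hm0
      rw [Nat.add_zero, e2, ← f1]
      exact f2
    · have hd : m1 + m2 - m1 = m2 := by omega
      rw [hd]
      exact f2
  · intro i hi
    dsimp only
    rcases lt_trichotomy i m1 with h | h | h
    · rw [if_pos (by omega : i ≤ m1), if_pos (by omega : i + 1 ≤ m1)]
      exact st1 i h
    · subst h
      rw [if_pos le_rfl, if_neg (by omega), e2, ← f1]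
      have hd : i + 1 - i = 0 + 1 := by omega
      rw [hd]
      exact st2 0 (by omega)
    · rw [if_neg (by omega), if_neg (by omega)]
      have hd : i + 1 - m1 = (i - m1) + 1 := by omega
      rw [hd]
      exact st2 (i - m1) (by omega)

lemma skipReach_scale {s N a b : ℕ} (hs : 2 ≤ s) (h : SkipReach s N a b) :
    SkipReach s N (s * a) (s * b) := by
  obtain ⟨m, hm, c, e1, e2, st⟩ := h
  refine ⟨m, hm, fun i => s * c i, ?_, ?_, fun i hi => ?_⟩
  · show s * c 0 = s * a
    rw [e1]
  · show s * c m = s * b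
    rw [e2]
  · obtain ⟨hlt, hor⟩ := st i hi
    show SkipStep s (s * c i) (s * c (i + 1))
    refine ⟨mul_lt_mul_of_pos_left hlt (by omega : 0 < s), Or.inr ?_⟩
    rcases hor with h1 | ⟨j, hj, hdvd, heq⟩
    · refine ⟨1, le_rfl, by rw [pow_one]; exact dvd_mul_right s (c i), ?_⟩
      rw [pow_one, h1, Nat.mul_sub, mul_one]
    · refine ⟨j + 1, by omega, ?_, ?_⟩
      · rw [pow_succ']
        exact mul_dvd_mul_left s hdvd
      · rw [heq, Nat.mul_sub, pow_succ']

lemma skip_key (s : ℕ) (hs : 2 ≤ s) : ∀ k d g, g ≤ d → d - g < s ^ (k + 1) →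
    SkipReach s ((2 * k + 1) * (s - 1)) d g := by
  intro k
  induction k with
  | zero =>
    intro d g hgd h
    rw [pow_one] at h
    exact skipReach_unit s _ d g hgd (by omega)
  | succ k ih =>
    intro d g hgd h
    by_cases hsmall : d - g < s
    · have h1 : s - 1 ≤ (2 * (k + 1) + 1) * (s - 1) :=
        Nat.le_mul_of_pos_left (s - 1) (by omega)
      exact skipReach_unit s _ d g hgd (by omega)
    · push_neg at hsmall
      have hdm := Nat.div_add_mod d s
      have hdm2 : d % s < s := Nat.mod_lt _ (by omega)
      have hgm := Nat.div_add_mod (g + s - 1) s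
      have hgm2 : (g + s - 1) % s < s := Nat.mod_lt _ (by omega)
      set D := d / s with hDdef
      set cg := (g + s - 1) / s with hcgdef
      have hD1 : s * D ≤ d := by omega
      have hcg1 : g ≤ s * cg := by omega
      have hcg2 : s * cg < g + s := by omega
      have hcgD : cg ≤ D := by
        rw [hDdef, hcgdef]
        apply Nat.div_le_div_right
        omega
      have hsub : s * (D - cg) ≤ d - g := by
        rw [Nat.mul_sub]
        omega
      have hpow : s ^ (k + 1 + 1) = s * s ^ (k + 1) := by ring
      have hmid : D - cg < s ^ (k + 1) := by
        by_contra hc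
        push_neg at hc
        have h2 : s * s ^ (k + 1) ≤ s * (D - cg) := Nat.mul_le_mul_left _ hc
        omega
      have r2 : SkipReach s ((2 * k + 1) * (s - 1)) (s * D) (s * cg) :=
        skipReach_scale hs (ih D cg hcgD hmid)
      have r1 : SkipReach s (s - 1) d (s * D) := skipReach_unit s _ _ _ hD1 (by omega)
      have r3 : SkipReach s (s - 1) (s * cg) g := skipReach_unit s _ _ _ hcg1 (by omega)
      have rall := skipReach_trans r1 (skipReach_trans r2 r3)
      refine skipReach_mono (le_of_eq ?_) rall
      ring

/-- Skip-list traversal bound: for s ≥ 2 and g ≤ d there are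
m ≤ 2·s·(log_s(d) + 1) and a strictly decreasing sequence
d = c₀ > c₁ > … > c_m = g such that each step either decreases by 1 or
jumps from c_i down by s^j for some j ≥ 1 with s^j ∣ c_i. -/
theorem stmt15 (s g d : ℕ) (hs : 2 ≤ s) (hgd : g ≤ d) :
    ∃ m ≤ 2 * s * (Nat.log s d + 1), ∃ c : ℕ → ℕ,
      c 0 = d ∧ c m = g ∧ (∀ i < m, c (i + 1) < c i) ∧
      ∀ i < m, c (i + 1) = c i - 1 ∨
        ∃ j, 1 ≤ j ∧ s ^ j ∣ c i ∧ c (i + 1) = c i - s ^ j := by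
  have hlog : d - g < s ^ (Nat.log s d + 1) :=
    lt_of_le_of_lt (Nat.sub_le d g) (Nat.lt_pow_succ_log_self (by omega) d)
  obtain ⟨m, hm, c, h0, h1, hstep⟩ := skip_key s hs (Nat.log s d) d g hgd hlog
  have hb1 : (2 * Nat.log s d + 1) * (s - 1) ≤ (2 * Nat.log s d + 2) * s :=
    Nat.mul_le_mul (by omega) (by omega)
  have hb2 : (2 * Nat.log s d + 2) * s = 2 * s * (Nat.log s d + 1) := by ring
  exact ⟨m, by omega, c, h0, h1, fun i hi => (hstep i hi).1, fun i hi => (hstep i hi).2⟩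
end
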